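/- arXiv:1705.02303 — 3 statements merged into one kernel-verified Lean document; each statement's English description precedes it below -/
import Mathlib

section
/- Concentration of the angle between random unit vectors (Lemma 1): There exists a universal constant K > 0 such that for every integer p ≥ 2, every ζ ∈ (0, π/2), and every unit vector a ∈ ℝ^p, the uniform (rotation-invariant) probability measure μ_p on the unit sphere of ℝ^p satisfies μ_p { b : |Real.arccos ⟨a, b⟩ − π/2| ≤ ζ } ≥ 1 − K·√p·(Real.cos ζ)^{p−2}. -/
open MeasureTheory
open scoped InnerProductSpace

open Real in
section
open Real
open scoped ENNReal NNReal
noncomputable section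
namespace AngleConc

variable (p : ℕ)

/-- density of the standard Gaussian on ℝ^p -/
def gdens (x : EuclideanSpace ℝ (Fin p)) : ℝ :=
  ((Real.sqrt (2 * π))⁻¹) ^ p * Real.exp (-(‖x‖ ^ 2) / 2)

lemma gdens_nonneg (x : EuclideanSpace ℝ (Fin p)) : 0 ≤ gdens p x :=
  mul_nonneg (pow_nonneg (inv_nonneg.2 (Real.sqrt_nonneg _)) _) (Real.exp_nonneg _)

lemma gdens_continuous : Continuous (gdens p) := by
  unfold gdens
  fun_prop

/-- standard Gaussian measure on ℝ^p -/
def gmeas : Measure (EuclideanSpace ℝ (Fin p)) :=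
  volume.withDensity fun x => ENNReal.ofReal (gdens p x)

lemma norm_sq_eq (x : EuclideanSpace ℝ (Fin p)) : ‖x‖ ^ 2 = ∑ i, (x i) ^ 2 := by
  rw [EuclideanSpace.norm_eq, Real.sq_sqrt]
  · simp [sq_abs]
  · positivity

/-- the density times an exponential of a diagonal quadratic form, as a product over
coordinates -/
lemma gdens_mul_exp (κ : Fin p → ℝ) (x : EuclideanSpace ℝ (Fin p)) :
    gdens p x * Real.exp (∑ i, κ i * (x i) ^ 2)
      = ∏ i, ((Real.sqrt (2 * π))⁻¹ * Real.exp (-(1/2 - κ i) * (x i) ^ 2)) := by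
  rw [Finset.prod_mul_distrib, Finset.prod_const, ← Real.exp_sum, gdens, norm_sq_eq,
    mul_assoc, ← Real.exp_add]
  congr 2
  · simp
  have : ∀ i : Fin p, -(1/2 - κ i) * (x i) ^ 2 = κ i * (x i) ^ 2 - (x i) ^ 2 / 2 :=
    fun i => by ring
  rw [Finset.sum_congr rfl fun i _ => this i, Finset.sum_sub_distrib, ← Finset.sum_div]
  ring


lemma integrable_prod_exp (q : Fin p → ℝ) (hq : ∀ i, 0 < q i) :
    Integrable (fun x : EuclideanSpace ℝ (Fin p) =>
      ∏ i, ((Real.sqrt (2 * π))⁻¹ * Real.exp (-(q i) * (x i) ^ 2))) volume := by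
  have h := (EuclideanSpace.volume_preserving_symm_measurableEquiv_toLp (Fin p)).symm
  rw [← h.integrable_comp_emb (MeasurableEquiv.measurableEmbedding _)]
  have : ((fun x : EuclideanSpace ℝ (Fin p) =>
      ∏ i, ((Real.sqrt (2 * π))⁻¹ * Real.exp (-(q i) * (x i) ^ 2)))
      ∘ (MeasurableEquiv.toLp 2 (Fin p → ℝ)).symm.symm)
      = fun y : Fin p → ℝ => ∏ i, ((Real.sqrt (2 * π))⁻¹ * Real.exp (-(q i) * (y i) ^ 2)) :=
    rfl
  rw [this]
  exact Integrable.fintype_prod (f := fun i t => (Real.sqrt (2 * π))⁻¹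
    * Real.exp (-(q i) * t ^ 2))
    fun i => (integrable_exp_neg_mul_sq (hq i)).const_mul _

lemma integral_prod_exp (q : Fin p → ℝ) (hq : ∀ i, 0 < q i) :
    ∫ x : EuclideanSpace ℝ (Fin p),
        ∏ i, ((Real.sqrt (2 * π))⁻¹ * Real.exp (-(q i) * (x i) ^ 2))
      = ∏ i, Real.sqrt (1 / (2 * q i)) := by
  have h := (EuclideanSpace.volume_preserving_symm_measurableEquiv_toLp (Fin p)).symm
  rw [← h.integral_comp (MeasurableEquiv.measurableEmbedding _)]
  have : ∀ y : Fin p → ℝ, (fun x : EuclideanSpace ℝ (Fin p) =>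
      ∏ i, ((Real.sqrt (2 * π))⁻¹ * Real.exp (-(q i) * (x i) ^ 2)))
      ((MeasurableEquiv.toLp 2 (Fin p → ℝ)).symm.symm y)
      = ∏ i, ((Real.sqrt (2 * π))⁻¹ * Real.exp (-(q i) * (y i) ^ 2)) := fun y => rfl
  rw [MeasureTheory.integral_congr_ae (Filter.Eventually.of_forall this),
    MeasureTheory.volume_pi, MeasureTheory.integral_fintype_prod_eq_prod (ι := Fin p)
      (f := fun i t => (Real.sqrt (2 * π))⁻¹ * Real.exp (-(q i) * t ^ 2))]
  refine Finset.prod_congr rfl fun i _ => ?_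
  rw [MeasureTheory.integral_const_mul, integral_gaussian]
  rw [← Real.sqrt_inv, ← Real.sqrt_mul (by positivity)]
  congr 1
  have hπ : π ≠ 0 := Real.pi_ne_zero
  have hqi := (hq i).ne'
  field_simp

lemma integrable_gdens_mul_exp (κ : Fin p → ℝ) (hκ : ∀ i, κ i < 1/2) :
    Integrable (fun x : EuclideanSpace ℝ (Fin p) =>
      gdens p x * Real.exp (∑ i, κ i * (x i) ^ 2)) volume := by
  have := integrable_prod_exp p (fun i => 1/2 - κ i) (fun i => by linarith [hκ i])
  refine this.congr (Filter.Eventually.of_forall fun x => ?_)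
  exact (gdens_mul_exp p κ x).symm

lemma integral_gdens_mul_exp (κ : Fin p → ℝ) (hκ : ∀ i, κ i < 1/2) :
    ∫ x : EuclideanSpace ℝ (Fin p), gdens p x * Real.exp (∑ i, κ i * (x i) ^ 2)
      = ∏ i, Real.sqrt (1 / (2 * (1/2 - κ i))) := by
  rw [MeasureTheory.integral_congr_ae (Filter.Eventually.of_forall (gdens_mul_exp p κ)),
    integral_prod_exp p (fun i => 1/2 - κ i) (fun i => by linarith [hκ i])]

lemma integral_gdens : ∫ x : EuclideanSpace ℝ (Fin p), gdens p x = 1 := by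
  have := integral_gdens_mul_exp p (fun _ => 0) (fun i => by norm_num)
  simp only [zero_mul, Finset.sum_const_zero, Real.exp_zero, mul_one, sub_zero] at this
  rw [this]
  norm_num

lemma gdens_measurable : Measurable (gdens p) := (gdens_continuous p).measurable

instance gmeas_prob : IsProbabilityMeasure (gmeas p) := by
  constructor
  rw [gmeas, withDensity_apply _ MeasurableSet.univ, Measure.restrict_univ,
    ← MeasureTheory.ofReal_integral_eq_lintegral_ofReal
      (by simpa using integrable_gdens_mul_exp p (fun _ => 0) (fun i => by norm_num))
      (Filter.Eventually.of_forall (gdens_nonneg p)),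
    integral_gdens]
  simp

lemma gmeas_singleton_zero (hp : 0 < p) : gmeas p {0} = 0 := by
  haveI : Nontrivial (EuclideanSpace ℝ (Fin p)) := by
    refine ⟨EuclideanSpace.single ⟨0, hp⟩ 1, 0, ?_⟩
    intro h
    have := congrArg (· ⟨0, hp⟩) h
    simpa using this
  rw [gmeas, withDensity_apply _ (measurableSet_singleton 0)]
  rw [MeasureTheory.Measure.restrict_eq_zero.2 (measure_singleton 0)]
  simp

lemma gmeas_map (f : EuclideanSpace ℝ (Fin p) ≃ₗᵢ[ℝ] EuclideanSpace ℝ (Fin p)) :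
    Measure.map f (gmeas p) = gmeas p := by
  refine Measure.ext fun A hA => ?_
  rw [gmeas, Measure.map_apply f.continuous.measurable hA,
    withDensity_apply _ (hA.preimage f.continuous.measurable), withDensity_apply _ hA]
  have hvol := f.measurePreserving
  calc ∫⁻ x in ⇑f ⁻¹' A, ENNReal.ofReal (gdens p x) ∂volume
      = ∫⁻ x in ⇑f ⁻¹' A, (fun y => ENNReal.ofReal (gdens p y)) (f x) ∂volume := by
        refine MeasureTheory.setLIntegral_congr_fun (hA.preimage f.continuous.measurable)
          (fun x _ => ?_)
        simp only [gdens, f.norm_map]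
    _ = ∫⁻ y in A, ENNReal.ofReal (gdens p y) ∂(Measure.map f volume) :=
        (MeasureTheory.setLIntegral_map hA
          (ENNReal.measurable_ofReal.comp (gdens_measurable p)) f.continuous.measurable).symm
    _ = ∫⁻ y in A, ENNReal.ofReal (gdens p y) ∂volume := by rw [hvol.map_eq]

set_option maxHeartbeats 1000000 in
lemma gmeas_tail {n : ℕ} (s c : ℝ) (hs : 0 < s) (hc : 0 < c) (hsc : s^2 + c^2 = 1) :
    gmeas (n+2) {g : EuclideanSpace ℝ (Fin (n+2)) | s * ‖g‖ < |g 0|}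
      ≤ ENNReal.ofReal (2 * Real.sqrt (n+2) * c ^ n) := by
  set lam : ℝ := (n+1) / (2*(n+2)*c^2) with hlam_def
  have hc2 : (0:ℝ) < c^2 := by positivity
  have hlam_pos : 0 < lam := by positivity
  set κ : Fin (n+2) → ℝ := fun i => if i = 0 then lam*c^2 else -(lam*s^2) with hκ_def
  have hκ0 : κ 0 = lam*c^2 := if_pos rfl
  have hlamc : lam * c^2 = (n+1) / (2*(n+2)) := by
    rw [hlam_def]
    field_simp
  have hκsucc : ∀ j : Fin (n+1), κ j.succ = -(lam*s^2) := by
    intro j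
    simp only [hκ_def]
    rw [if_neg (Fin.succ_ne_zero j)]
  have hκ : ∀ i, κ i < 1/2 := by
    intro i
    rcases eq_or_ne i 0 with hi | hi
    · rw [hi, hκ0, hlamc, div_lt_iff₀ (by positivity)]
      push_cast
      nlinarith
    · have : κ i = -(lam*s^2) := by simp only [hκ_def]; rw [if_neg hi]
      rw [this]
      nlinarith
  set f : EuclideanSpace ℝ (Fin (n+2)) → ℝ :=
    fun g => Real.exp (∑ i, κ i * (g i) ^ 2) with hf_def
  -- the event implies 1 ≤ f
  have hsub : {g : EuclideanSpace ℝ (Fin (n+2)) | s * ‖g‖ < |g 0|} ⊆ {x | 1 ≤ f x} := by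
    intro g hg
    simp only [Set.mem_setOf_eq] at hg ⊢
    have h1 : (s * ‖g‖)^2 ≤ |g 0|^2 :=
      pow_le_pow_left₀ (by positivity) hg.le 2
    rw [sq_abs, mul_pow, norm_sq_eq] at h1
    have hsum : ∑ i, (g i)^2 = (g 0)^2 + ∑ j : Fin (n+1), (g j.succ)^2 :=
      Fin.sum_univ_succ _
    set T := ∑ j : Fin (n+1), (g j.succ)^2 with hT_def
    have hT0 : 0 ≤ T := Finset.sum_nonneg fun j _ => sq_nonneg _
    have hkey : s^2 * T ≤ c^2 * (g 0)^2 := by nlinarith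
    have hexp : 0 ≤ ∑ i, κ i * (g i) ^ 2 := by
      rw [Fin.sum_univ_succ, hκ0]
      rw [Finset.sum_congr rfl fun j _ => by rw [hκsucc j]]
      have : ∑ j : Fin (n+1), -(lam*s^2) * (g j.succ)^2 = -(lam * (s^2 * T)) := by
        rw [← Finset.mul_sum, ← hT_def]
        ring
      rw [this]
      nlinarith
    rw [hf_def, ← Real.exp_zero]
    exact Real.exp_le_exp.2 hexp
  -- integrability of f with respect to gmeas
  have hf_meas : Measurable f := by
    apply Measurable.exp
    exact Finset.measurable_sum _ fun i _ =>
      (measurable_const.mul (((measurable_pi_apply i).comp (WithLp.measurable_ofLp 2 _)).pow_const 2))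
  have hgd_nn : Measurable fun x : EuclideanSpace ℝ (Fin (n+2)) => (gdens (n+2) x).toNNReal :=
    (gdens_measurable (n+2)).real_toNNReal
  have hgmeas_eq : gmeas (n+2) = volume.withDensity
      fun x => ((gdens (n+2) x).toNNReal : ℝ≥0∞) := rfl
  have hsmul_eq : ∀ x : EuclideanSpace ℝ (Fin (n+2)),
      (gdens (n+2) x).toNNReal • f x = gdens (n+2) x * f x := by
    intro x
    rw [NNReal.smul_def, Real.coe_toNNReal _ (gdens_nonneg _ x), smul_eq_mul]
  have hInt : Integrable f (gmeas (n+2)) := by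
    rw [hgmeas_eq, integrable_withDensity_iff_integrable_smul hgd_nn]
    refine (integrable_gdens_mul_exp (n+2) κ hκ).congr
      (Filter.Eventually.of_forall fun x => ?_)
    exact (hsmul_eq x).symm
  have hIntegral : ∫ x, f x ∂(gmeas (n+2))
      = ∏ i, Real.sqrt (1 / (2 * (1/2 - κ i))) := by
    rw [hgmeas_eq, integral_withDensity_eq_integral_smul hgd_nn,
      MeasureTheory.integral_congr_ae (Filter.Eventually.of_forall hsmul_eq),
      integral_gdens_mul_exp (n+2) κ hκ]
  -- evaluate the product
  have hprod : ∏ i, Real.sqrt (1 / (2 * (1/2 - κ i)))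
      = Real.sqrt (n+2) * (c * Real.sqrt ((n+2) / (n+2-s^2)))^(n+1) := by
    rw [Fin.prod_univ_succ]
    have h0 : (1:ℝ) / (2 * (1/2 - κ 0)) = n+2 := by
      rw [hκ0, hlamc]
      have : (1:ℝ)/2 - (n+1)/(2*(n+2)) = 1/(2*(n+2)) := by
        field_simp
        ring
      rw [this]
      field_simp
    have hden : (0:ℝ) < n+2-s^2 := by nlinarith
    have hl : lam * s^2 * (2*(n+2)*c^2) = (n+1)*s^2 := by
      rw [hlam_def]
      field_simp
    have key : ((1:ℝ)/2 + lam*s^2) * (2*(n+2)*c^2) = n+2-s^2 := by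
      have expand : ((1:ℝ)/2 + lam*s^2) * (2*(n+2)*c^2)
          = (n+2)*c^2 + lam*s^2*(2*(n+2)*c^2) := by ring
      rw [expand, hl]
      linear_combination ((n:ℝ)+2)*hsc
    have h12 : (1:ℝ)/2 + lam*s^2 = (n+2-s^2)/(2*(n+2)*c^2) := by
      rw [eq_div_iff (by positivity : (2*((n:ℝ)+2)*c^2) ≠ 0)]
      exact key
    have hsucc : ∀ j : Fin (n+1), (1:ℝ) / (2 * (1/2 - κ j.succ))
        = c^2 * ((n+2) / (n+2-s^2)) := by
      intro j
      rw [hκsucc j, sub_neg_eq_add, h12]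
      field_simp
    rw [h0, Finset.prod_congr rfl fun j _ => congrArg Real.sqrt (hsucc j),
      Finset.prod_const]
    have hden : (0:ℝ) < (n+2) / (n+2-s^2) := by
      apply div_pos (by positivity) (by nlinarith)
    rw [Real.sqrt_mul (sq_nonneg c), Real.sqrt_sq hc.le]
    simp [Fintype.card_fin]
  -- bound the product
  have hbound : Real.sqrt (n+2) * (c * Real.sqrt ((n+2) / (n+2-s^2)))^(n+1)
      ≤ 2 * Real.sqrt (n+2) * c ^ n := by
    set B := Real.sqrt ((n+2) / (n+2-s^2)) with hB_def
    have hden : (0:ℝ) < n+2-s^2 := by nlinarith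
    have hB0 : 0 ≤ B := Real.sqrt_nonneg _
    have hB2 : B^2 = (n+2) / (n+2-s^2) :=
      Real.sq_sqrt (div_pos (by positivity) hden).le
    have hBpow : (B^(n+1))^2 ≤ 4 := by
      rw [← pow_mul, mul_comm, pow_mul, hB2]
      have hs1 : s^2 ≤ 1 := by nlinarith
      have h1 : (n+2:ℝ) / (n+2-s^2) ≤ 1 + 1/(n+1) := by
        have e : (1:ℝ) + 1/(n+1) = (n+2)/(n+1) := by
          field_simp
          ring
        have hle : (n:ℝ)+1 ≤ n+2-s^2 := by nlinarith
        rw [e]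
        gcongr
      have h2 : ((n+2:ℝ) / (n+2-s^2))^(n+1) ≤ (1 + 1/(n+1))^(n+1) :=
        pow_le_pow_left₀ (by positivity) h1 _
      have h3 : ((1:ℝ) + 1/(n+1))^(n+1) ≤ Real.exp (1/(n+1)) ^ (n+1) :=
        pow_le_pow_left₀ (by positivity) (by
          have := Real.add_one_le_exp (1/(n+1):ℝ)
          linarith) _
      have h4 : Real.exp (1/(n+1):ℝ) ^ (n+1) = Real.exp 1 := by
        rw [← Real.exp_nat_mul]
        congr 1
        field_simp
        norm_num
      have h5 : Real.exp 1 ≤ 4 := by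
        have := Real.exp_one_lt_d9
        linarith
      calc ((n+2:ℝ) / (n+2-s^2))^(n+1) ≤ (1 + 1/(n+1))^(n+1) := h2
        _ ≤ Real.exp (1/(n+1)) ^ (n+1) := h3
        _ = Real.exp 1 := h4
        _ ≤ 4 := h5
    have hBn : B^(n+1) ≤ 2 := by nlinarith [pow_nonneg hB0 (n+1)]
    have hc1 : c ≤ 1 := by nlinarith
    have hcn : (0:ℝ) ≤ c^n := by positivity
    calc Real.sqrt (n+2) * (c * B)^(n+1)
        = Real.sqrt (n+2) * (c^n * (c * B^(n+1))) := by ring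
      _ ≤ Real.sqrt (n+2) * (c^n * (1 * 2)) := by
          have h1 : c * B^(n+1) ≤ 1 * 2 :=
            mul_le_mul hc1 hBn (by positivity) one_pos.le
          exact mul_le_mul_of_nonneg_left (mul_le_mul_of_nonneg_left h1 hcn)
            (Real.sqrt_nonneg _)
      _ = 2 * Real.sqrt (n+2) * c ^ n := by ring
  -- Markov
  have hMarkov := mul_meas_ge_le_integral_of_nonneg
    (Filter.Eventually.of_forall fun x => (Real.exp_pos _).le) hInt 1
  rw [one_mul, hIntegral, hprod] at hMarkov
  calc gmeas (n+2) {g : EuclideanSpace ℝ (Fin (n+2)) | s * ‖g‖ < |g 0|}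
      ≤ gmeas (n+2) {x | 1 ≤ f x} := measure_mono hsub
    _ ≤ ENNReal.ofReal (2 * Real.sqrt (n+2) * c ^ n) := by
        rw [ENNReal.le_ofReal_iff_toReal_le (measure_ne_top _ _) (by positivity)]
        exact hMarkov.trans hbound

lemma abs_arccos_sub_le_iff {t ζ : ℝ} (ht : |t| ≤ 1) (hζ0 : 0 < ζ) (hζ : ζ < π/2) :
    |Real.arccos t - π/2| ≤ ζ ↔ |t| ≤ Real.sin ζ := by
  have habs1 : -1 ≤ t := by cases abs_le.1 ht; assumption
  have habs2 : t ≤ 1 := by cases abs_le.1 ht; assumption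
  have h1 : Real.arccos t - π/2 = -Real.arcsin t := by
    rw [Real.arccos_eq_pi_div_two_sub_arcsin]
    ring
  rw [h1, abs_neg]
  have habs : |Real.arcsin t| = Real.arcsin |t| := by
    rcases le_or_gt 0 t with h | h
    · rw [abs_of_nonneg h, abs_of_nonneg (Real.arcsin_nonneg.2 h)]
    · rw [abs_of_neg h, abs_of_nonpos (Real.arcsin_nonpos.2 h.le), Real.arcsin_neg]
  rw [habs]
  have hπ := Real.pi_pos
  rw [← Real.arcsin_le_iff_le_sin ⟨by linarith [abs_nonneg t], ht⟩ ⟨by linarith, hζ.le⟩]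

end AngleConc
end

open AngleConc


/-- **Concentration of the angle between random unit vectors (Lemma 1).**
For the uniform (rotation-invariant) probability measure on the unit sphere of `ℝ^p` and any
fixed unit vector `a`, the angle `arccos ⟨a, b⟩` lies within `ζ` of `π/2` with probability at
least `1 − K·√p·(cos ζ)^{p−2}`, for a universal constant `K`. -/
theorem angle_concentration_random_unit_vectors :
    ∃ K : ℝ, 0 < K ∧
      ∀ (p : ℕ), 2 ≤ p → ∀ ζ : ℝ, 0 < ζ → ζ < Real.pi / 2 →
      ∀ a : EuclideanSpace ℝ (Fin p), ‖a‖ = 1 →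
      ∀ μ : Measure (EuclideanSpace ℝ (Fin p)), IsProbabilityMeasure μ →
        μ (Metric.sphere (0 : EuclideanSpace ℝ (Fin p)) 1) = 1 →
        (∀ f : EuclideanSpace ℝ (Fin p) ≃ₗᵢ[ℝ] EuclideanSpace ℝ (Fin p),
          Measure.map f μ = μ) →
        1 - K * Real.sqrt p * Real.cos ζ ^ (p - 2)
          ≤ (μ {b : EuclideanSpace ℝ (Fin p) |
              |Real.arccos ⟪a, b⟫_ℝ - Real.pi / 2| ≤ ζ}).toReal := by
  refine ⟨2, two_pos, ?_⟩
  intro p hp ζ hζ0 hζπ a ha μ hμprob hμS hinv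
  haveI := hμprob
  obtain ⟨n, rfl⟩ : ∃ n, p = n + 2 := ⟨p - 2, by omega⟩
  have hπ := Real.pi_pos
  set s := Real.sin ζ with hs_def
  set c := Real.cos ζ with hc_def
  have hs0 : 0 < s := Real.sin_pos_of_pos_of_lt_pi hζ0 (by linarith)
  have hc0 : 0 < c := Real.cos_pos_of_mem_Ioo ⟨by linarith, hζπ⟩
  have hsc : s^2 + c^2 = 1 := Real.sin_sq_add_cos_sq ζ
  set S : Set (EuclideanSpace ℝ (Fin (n+2))) := {b | ‖b‖ = 1} with hS_def
  have hS_meas : MeasurableSet S := (isClosed_eq continuous_norm continuous_const).measurableSet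
  have hμS' : μ S = 1 := by
    rw [← hμS]
    congr 1
    ext b
    simp only [hS_def, Set.mem_setOf_eq, Metric.mem_sphere, dist_zero_right]
  set G : Set (EuclideanSpace ℝ (Fin (n+2))) :=
    {b | |Real.arccos ⟪a, b⟫_ℝ - Real.pi / 2| ≤ ζ} with hG_def
  set Bad : Set (EuclideanSpace ℝ (Fin (n+2))) :=
    {b | ‖b‖ = 1 ∧ s < |⟪a, b⟫_ℝ|} with hBad_def
  have hinner_cont : ∀ x : EuclideanSpace ℝ (Fin (n+2)),
      Continuous fun b : EuclideanSpace ℝ (Fin (n+2)) => ⟪x, b⟫_ℝ :=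
    fun x => Continuous.inner continuous_const continuous_id
  have hset_meas : ∀ x : EuclideanSpace ℝ (Fin (n+2)),
      MeasurableSet {b : EuclideanSpace ℝ (Fin (n+2)) | ‖b‖ = 1 ∧ s < |⟪x, b⟫_ℝ|} := by
    intro x
    rw [Set.setOf_and]
    exact hS_meas.inter
      (measurableSet_lt measurable_const ((hinner_cont x).abs.measurable))
  -- Step 1: invariance of μ makes the bad-cap measure independent of the unit direction
  have hconst : ∀ x : EuclideanSpace ℝ (Fin (n+2)), ‖x‖ = 1 →
      μ {b | ‖b‖ = 1 ∧ s < |⟪x, b⟫_ℝ|} = μ Bad := by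
    intro x hx
    have hax : ‖a‖ = ‖x‖ := by rw [ha, hx]
    set f := Submodule.reflection (Submodule.span ℝ {a - x})ᗮ with hf
    have hfa : f a = x := Submodule.reflection_sub hax
    calc μ {b | ‖b‖ = 1 ∧ s < |⟪x, b⟫_ℝ|}
        = (Measure.map f μ) {b | ‖b‖ = 1 ∧ s < |⟪x, b⟫_ℝ|} := by rw [hinv f]
      _ = μ (⇑f ⁻¹' {b | ‖b‖ = 1 ∧ s < |⟪x, b⟫_ℝ|}) :=
          Measure.map_apply f.continuous.measurable (hset_meas x)
      _ = μ Bad := by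
          congr 1
          ext b
          simp only [Set.mem_preimage, Set.mem_setOf_eq, hBad_def]
          rw [f.norm_map, ← hfa, f.inner_map_map]
  -- Step 2: Fubini with an auxiliary Gaussian measure
  set γ := gmeas (n+2) with hγ_def
  haveI : IsProbabilityMeasure γ := gmeas_prob (n+2)
  set e0 : EuclideanSpace ℝ (Fin (n+2)) := EuclideanSpace.single 0 1 with he0_def
  have he0 : ‖e0‖ = 1 := by rw [he0_def, EuclideanSpace.norm_single, norm_one]
  set T : Set (EuclideanSpace ℝ (Fin (n+2)) × EuclideanSpace ℝ (Fin (n+2))) :=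
    {q | q.1 ≠ 0 ∧ (‖q.2‖ = 1 ∧ s * ‖q.1‖ < |⟪q.1, q.2⟫_ℝ|)} with hT_def
  have hT_meas : MeasurableSet T := by
    rw [hT_def, Set.setOf_and, Set.setOf_and]
    refine MeasurableSet.inter ?_ (MeasurableSet.inter ?_ ?_)
    · exact (isClosed_eq continuous_fst continuous_const).measurableSet.compl
    · exact (isClosed_eq continuous_snd.norm continuous_const).measurableSet
    · exact measurableSet_lt (continuous_fst.norm.const_smul s).measurable
        ((Continuous.inner continuous_fst continuous_snd).abs.measurable)
  have hEb_meas : ∀ x : EuclideanSpace ℝ (Fin (n+2)),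
      MeasurableSet {g : EuclideanSpace ℝ (Fin (n+2)) | g ≠ 0 ∧ s * ‖g‖ < |⟪g, x⟫_ℝ|} := by
    intro x
    rw [Set.setOf_and]
    refine MeasurableSet.inter ?_ ?_
    · exact (isClosed_eq continuous_id continuous_const).measurableSet.compl
    · exact measurableSet_lt (continuous_norm.const_smul s).measurable
        ((Continuous.inner continuous_id continuous_const).abs.measurable)
  -- first evaluation of the product measure
  have hprod1 : (γ.prod μ) T = μ Bad := by
    rw [Measure.prod_apply hT_meas]
    have hsec : ∀ g : EuclideanSpace ℝ (Fin (n+2)), g ≠ 0 →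
        μ (Prod.mk g ⁻¹' T) = μ Bad := by
      intro g hg
      have hgn : 0 < ‖g‖ := norm_pos_iff.2 hg
      have hunit : ‖(‖g‖⁻¹ • g)‖ = 1 := by
        rw [norm_smul, norm_inv, norm_norm, inv_mul_cancel₀ hgn.ne']
      have heq : Prod.mk g ⁻¹' T = {b | ‖b‖ = 1 ∧ s < |⟪(‖g‖⁻¹ • g), b⟫_ℝ|} := by
        ext b
        simp only [hT_def, Set.mem_preimage, Set.mem_setOf_eq]
        rw [real_inner_smul_left, abs_mul, abs_inv, abs_norm, inv_mul_eq_div,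
          lt_div_iff₀ hgn]
        exact ⟨fun h => ⟨h.2.1, by linarith [h.2.2]⟩, fun h => ⟨hg, h.1, by linarith [h.2]⟩⟩
      rw [heq]
      exact hconst _ hunit
    have hae : ∀ᵐ g ∂γ, μ (Prod.mk g ⁻¹' T) = μ Bad := by
      have h0 : γ {(0 : EuclideanSpace ℝ (Fin (n+2)))} = 0 :=
        gmeas_singleton_zero (n+2) (by omega)
      rw [MeasureTheory.ae_iff]
      refine measure_mono_null ?_ h0
      intro g hgmem
      simp only [Set.mem_setOf_eq] at hgmem
      by_contra hgz
      exact hgmem (hsec g hgz)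
    rw [lintegral_congr_ae hae, lintegral_const, measure_univ, mul_one]
  -- rotation invariance of the Gaussian measure
  have hrot : ∀ b : EuclideanSpace ℝ (Fin (n+2)), ‖b‖ = 1 →
      γ {g | g ≠ 0 ∧ s * ‖g‖ < |⟪g, b⟫_ℝ|} = γ {g | g ≠ 0 ∧ s * ‖g‖ < |⟪g, e0⟫_ℝ|} := by
    intro b hb
    set f := Submodule.reflection (Submodule.span ℝ {b - e0})ᗮ with hf
    have hfb : f b = e0 := Submodule.reflection_sub (by rw [hb, he0])
    have hfe0 : f e0 = b := by rw [← hfb]; exact Submodule.reflection_reflection _ b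
    calc γ {g | g ≠ 0 ∧ s * ‖g‖ < |⟪g, b⟫_ℝ|}
        = (Measure.map f γ) {g | g ≠ 0 ∧ s * ‖g‖ < |⟪g, b⟫_ℝ|} := by
          rw [hγ_def, gmeas_map]
      _ = γ (⇑f ⁻¹' {g | g ≠ 0 ∧ s * ‖g‖ < |⟪g, b⟫_ℝ|}) :=
          Measure.map_apply f.continuous.measurable (hEb_meas b)
      _ = γ {g | g ≠ 0 ∧ s * ‖g‖ < |⟪g, e0⟫_ℝ|} := by
          congr 1
          ext g
          simp only [Set.mem_preimage, Set.mem_setOf_eq]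
          rw [f.norm_map, ← hfe0, f.inner_map_map]
          simp only [ne_eq, f.map_eq_zero_iff]
  -- second evaluation of the product measure
  set β := γ {g : EuclideanSpace ℝ (Fin (n+2)) | g ≠ 0 ∧ s * ‖g‖ < |⟪g, e0⟫_ℝ|} with hβ_def
  have hprod2 : (γ.prod μ) T = β := by
    rw [Measure.prod_apply_symm hT_meas]
    have hsec2 : ∀ b : EuclideanSpace ℝ (Fin (n+2)),
        γ ((fun g => (g, b)) ⁻¹' T) = S.indicator (fun _ => β) b := by
      intro b
      by_cases hb : ‖b‖ = 1
      · rw [Set.indicator_of_mem (by exact hb : b ∈ S)]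
        have heq : (fun g => (g, b)) ⁻¹' T = {g | g ≠ 0 ∧ s * ‖g‖ < |⟪g, b⟫_ℝ|} := by
          ext g
          simp only [hT_def, Set.mem_preimage, Set.mem_setOf_eq]
          exact ⟨fun h => ⟨h.1, h.2.2⟩, fun h => ⟨h.1, hb, h.2⟩⟩
        rw [heq]
        exact hrot b hb
      · rw [Set.indicator_of_notMem (by exact hb : b ∉ S)]
        have heq : (fun g => (g, b)) ⁻¹' T = (∅ : Set (EuclideanSpace ℝ (Fin (n+2)))) := by
          ext g
          simp only [hT_def, Set.mem_preimage, Set.mem_setOf_eq, Set.mem_empty_iff_false,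
            iff_false]
          intro h
          exact hb h.2.1
        rw [heq, measure_empty]
    rw [lintegral_congr hsec2, lintegral_indicator hS_meas, MeasureTheory.setLIntegral_const,
      hμS', mul_one]
  -- Step 3: Gaussian tail bound
  have hβ_le : β ≤ ENNReal.ofReal (2 * Real.sqrt (n+2) * c ^ n) := by
    refine le_trans (measure_mono ?_) (gmeas_tail s c hs0 hc0 hsc)
    intro g hg
    simp only [Set.mem_setOf_eq] at hg ⊢
    have : ⟪g, e0⟫_ℝ = g 0 := by
      rw [he0_def, EuclideanSpace.inner_single_right]
      simp
    rw [← this]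
    exact hg.2
  have hBad_le : μ Bad ≤ ENNReal.ofReal (2 * Real.sqrt (n+2) * c ^ n) := by
    rw [← hprod1, hprod2]
    exact hβ_le
  -- conclusion
  have hSsub : S ⊆ G ∪ Bad := by
    intro b hb
    have hb1 : ‖b‖ = 1 := hb
    rcases le_or_gt |⟪a, b⟫_ℝ| s with h | h
    · left
      have hle1 : |⟪a, b⟫_ℝ| ≤ 1 := by
        have := abs_real_inner_le_norm a b
        rw [ha, hb1, one_mul] at this
        exact this
      exact (abs_arccos_sub_le_iff hle1 hζ0 hζπ).2 h
    · right
      exact ⟨hb1, h⟩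
  have h1le : (1 : ENNReal) ≤ μ G + μ Bad := by
    calc (1 : ENNReal) = μ S := hμS'.symm
      _ ≤ μ (G ∪ Bad) := measure_mono hSsub
      _ ≤ μ G + μ Bad := measure_union_le _ _
  have h2le : (1 : ENNReal) ≤ μ G + ENNReal.ofReal (2 * Real.sqrt (n+2) * c ^ n) :=
    h1le.trans (add_le_add_right hBad_le _)
  have hr_nonneg : (0:ℝ) ≤ 2 * Real.sqrt (n+2) * c ^ n := by positivity
  have htoReal : 1 ≤ (μ G).toReal + 2 * Real.sqrt (n+2) * c ^ n := by
    have hfin : μ G + ENNReal.ofReal (2 * Real.sqrt (n+2) * c ^ n) ≠ ⊤ := by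
      exact ENNReal.add_ne_top.2 ⟨measure_ne_top _ _, ENNReal.ofReal_ne_top⟩
    have := ENNReal.toReal_mono hfin h2le
    rwa [ENNReal.toReal_one, ENNReal.toReal_add (measure_ne_top _ _) ENNReal.ofReal_ne_top,
      ENNReal.toReal_ofReal hr_nonneg] at this
  have hcast : Real.sqrt ((n:ℝ)+2) = Real.sqrt ((n+2 : ℕ) : ℝ) := by push_cast; ring_nf
  have hexp : (n + 2) - 2 = n := by omega
  rw [hexp]
  have : (1:ℝ) - 2 * Real.sqrt ((n+2:ℕ) : ℝ) * c ^ n ≤ (μ G).toReal := by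
    rw [← hcast]
    linarith
  exact this
end
end

section
/- Monotonicity of the detection functional in Willie's Gram matrix (Appendix D): Let N_a ≥ 1, σ_w > 0, and let Q be an N_a×N_a complex Hermitian positive semidefinite matrix. If W₁ and W₂ are N_a×N_a complex Hermitian positive semidefinite matrices such that W₁ − W₂ is positive semidefinite, then D(W₁, Q) ≥ D(W₂, Q). -/
open Matrix
open scoped ComplexOrder

/-- The detection (relative-entropy) functional at Willie:
`D(W, Q) = log (det (1 + σ_w⁻² W Q)).re + ((1 + σ_w⁻² W Q)⁻¹.trace).re − N_a`. -/
noncomputable def Dfun {Na : ℕ} (σw : ℝ) (W Q : Matrix (Fin Na) (Fin Na) ℂ) : ℝ :=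
  Real.log ((1 + (σw ^ 2)⁻¹ • (W * Q)).det.re)
    + (((1 + (σw ^ 2)⁻¹ • (W * Q))⁻¹).trace).re - Na

section Aux

set_option linter.unusedSectionVars false

variable {n : Type*} [Fintype n] [DecidableEq n]

open scoped MatrixOrder in
noncomputable def Matrix.PosSemidef.sqrt {A : Matrix n n ℂ} (_hA : A.PosSemidef) :
    Matrix n n ℂ := CFC.sqrt A

open scoped MatrixOrder in
lemma Matrix.PosSemidef.posSemidef_sqrt {A : Matrix n n ℂ} (hA : A.PosSemidef) :
    hA.sqrt.PosSemidef := (CFC.sqrt_nonneg A).posSemidef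

open scoped MatrixOrder in
lemma Matrix.PosSemidef.sqrt_mul_self {A : Matrix n n ℂ} (hA : A.PosSemidef) :
    hA.sqrt * hA.sqrt = A := CFC.sqrt_mul_sqrt_self A hA.nonneg


lemma smul_posSemidef {c : ℝ} (hc : 0 ≤ c) {M : Matrix n n ℂ} (hM : M.PosSemidef) :
    (c • M).PosSemidef := by
  refine Matrix.PosSemidef.of_dotProduct_mulVec_nonneg ?_ ?_
  · show (c • M)ᴴ = c • M
    rw [Matrix.conjTranspose_smul, star_trivial, hM.1.eq]
  · intro x
    have h := hM.dotProduct_mulVec_nonneg x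
    calc (0:ℂ) = c • (0:ℂ) := by simp
    _ ≤ c • (star x ⬝ᵥ M *ᵥ x) := smul_le_smul_of_nonneg_left h hc
    _ = star x ⬝ᵥ (c • M) *ᵥ x := by
        rw [smul_mulVec, dotProduct_smul]

lemma posSemidef_trace_re_nonneg {M : Matrix n n ℂ} (hM : M.PosSemidef) :
    0 ≤ M.trace.re := by
  have h : ∀ i, 0 ≤ (M i i).re := by
    intro i
    have := hM.re_dotProduct_nonneg (Pi.single i 1)
    simpa [dotProduct, mulVec, Pi.single_apply, Finset.sum_ite_eq] using this
  simp only [Matrix.trace, Matrix.diag, Complex.re_sum]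
  exact Finset.sum_nonneg fun i _ => h i

lemma trace_mul_re_nonneg {A B : Matrix n n ℂ} (hA : A.PosSemidef) (hB : B.PosSemidef) :
    0 ≤ (A * B).trace.re := by
  have hs := hA.sqrt_mul_self
  have h1 : (A * B).trace = (hA.sqrt * B * hA.sqrt).trace := by
    have e : A * B = hA.sqrt * (hA.sqrt * B) := by rw [← Matrix.mul_assoc, hs]
    rw [e, Matrix.trace_mul_comm, Matrix.mul_assoc]
  have h2 : (hA.sqrt * B * hA.sqrt).PosSemidef := by
    have := hB.mul_mul_conjTranspose_same hA.sqrt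
    rwa [hA.posSemidef_sqrt.1.eq] at this
  rw [h1]
  exact posSemidef_trace_re_nonneg h2

lemma posDef_of_isUnit_det {X : Matrix n n ℂ} (hX : X.PosSemidef) (h : IsUnit X.det) :
    X.PosDef := by
  exact hX.posDef_iff_isUnit.mpr ((Matrix.isUnit_iff_isUnit_det X).mpr h)

lemma pd_isUnit_det {X : Matrix n n ℂ} (hX : X.PosDef) : IsUnit X.det :=
  isUnit_iff_ne_zero.mpr (ne_of_gt hX.det_pos)

lemma one_sub_inv_posSemidef {X : Matrix n n ℂ} (hX : X.PosDef)
    (h1 : (X - 1).PosSemidef) : ((1 : Matrix n n ℂ) - X⁻¹).PosSemidef := by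
  have hXi : X⁻¹.PosDef := hX.inv
  set Z := hXi.posSemidef.sqrt with hZ
  have hZH : Zᴴ = Z := hXi.posSemidef.posSemidef_sqrt.1.eq
  have hZZ : Z * Z = X⁻¹ := hXi.posSemidef.sqrt_mul_self
  have hZXZ : Z * X * Z = 1 := by
    have h1' : Z * (Z * X) = 1 := by
      rw [← Matrix.mul_assoc, hZZ, Matrix.nonsing_inv_mul _ (pd_isUnit_det hX)]
    have h2' : (Z * X) * Z = 1 := mul_eq_one_comm.mp h1'
    rw [Matrix.mul_assoc] at h2' ⊢
    exact h2'
  have key : Z * (X - 1) * Z = 1 - X⁻¹ := by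
    rw [Matrix.mul_sub, Matrix.mul_one, Matrix.sub_mul, hZXZ, hZZ]
  rw [← key]
  have := h1.mul_mul_conjTranspose_same Z
  rwa [hZH] at this

lemma trace_inv_re_eq {X : Matrix n n ℂ} (hX : X.PosDef) :
    (X⁻¹).trace.re = ∑ i, (hX.1.eigenvalues i)⁻¹ := by
  set U : Matrix n n ℂ := (hX.1.eigenvectorUnitary : Matrix n n ℂ)
  have hUU : star U * U = 1 := Unitary.coe_star_mul_self hX.1.eigenvectorUnitary
  have hUU' : U * star U = 1 := Unitary.coe_mul_star_self hX.1.eigenvectorUnitary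
  set D' : Matrix n n ℂ := diagonal (fun i => ((hX.1.eigenvalues i)⁻¹ : ℂ))
  have hev : ∀ i, hX.1.eigenvalues i ≠ 0 := fun i => ne_of_gt (hX.eigenvalues_pos i)
  have hinv : X⁻¹ = U * D' * star U := by
    apply Matrix.inv_eq_right_inv
    conv_lhs => rw [hX.1.spectral_theorem]
    calc (U * diagonal (RCLike.ofReal ∘ hX.1.eigenvalues) * star U) * (U * D' * star U)
        = U * diagonal (RCLike.ofReal ∘ hX.1.eigenvalues) * (star U * U) * D' * star U := by
          simp only [Matrix.mul_assoc]
      _ = U * (diagonal (RCLike.ofReal ∘ hX.1.eigenvalues) * D') * star U := by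
          rw [hUU]; simp only [Matrix.mul_one, Matrix.mul_assoc]
      _ = 1 := by
          rw [Matrix.diagonal_mul_diagonal]
          have : (fun i => (RCLike.ofReal ∘ hX.1.eigenvalues) i * ((hX.1.eigenvalues i)⁻¹ : ℂ))
              = fun _ => (1:ℂ) := by
            funext i
            show (↑(hX.1.eigenvalues i) : ℂ) * (↑(hX.1.eigenvalues i) : ℂ)⁻¹ = 1
            exact mul_inv_cancel₀ (by exact_mod_cast hev i)
          rw [this, Matrix.diagonal_one, Matrix.mul_one, hUU']
  rw [hinv]
  rw [Matrix.trace_mul_comm, ← Matrix.mul_assoc, hUU, Matrix.one_mul, Matrix.trace_diagonal]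
  push_cast
  simp

lemma det_re_eq_prod {X : Matrix n n ℂ} (hX : X.PosDef) :
    X.det.re = ∏ i, hX.1.eigenvalues i := by
  rw [hX.1.det_eq_prod_eigenvalues]
  norm_cast


lemma core_mono {A B : Matrix n n ℂ} (hA : A.PosSemidef) (hB : B.PosSemidef)
    (hAB : (A - B).PosSemidef) :
    Real.log ((1 + B).det.re) + ((1 + B)⁻¹).trace.re ≤
      Real.log ((1 + A).det.re) + ((1 + A)⁻¹).trace.re := by
  set N₁ : Matrix n n ℂ := 1 + A with hN₁def
  set N₂ : Matrix n n ℂ := 1 + B with hN₂def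
  have hN₁ : N₁.PosDef := Matrix.PosDef.add_posSemidef Matrix.PosDef.one hA
  have hN₂ : N₂.PosDef := Matrix.PosDef.add_posSemidef Matrix.PosDef.one hB
  set P : Matrix n n ℂ := hN₂.posSemidef.sqrt with hPdef
  have hPH : Pᴴ = P := hN₂.posSemidef.posSemidef_sqrt.1.eq
  have hPP : P * P = N₂ := hN₂.posSemidef.sqrt_mul_self
  have hPdet : IsUnit P.det := by
    have h2 : IsUnit (P.det * P.det) := by
      rw [← Matrix.det_mul, hPP]; exact pd_isUnit_det hN₂
    exact isUnit_of_mul_isUnit_left h2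
  have hPinv : P * P⁻¹ = 1 := Matrix.mul_nonsing_inv _ hPdet
  have hinvP : P⁻¹ * P = 1 := Matrix.nonsing_inv_mul _ hPdet
  have hPiH : (P⁻¹)ᴴ = P⁻¹ := by rw [Matrix.conjTranspose_nonsing_inv, hPH]
  set X : Matrix n n ℂ := P⁻¹ * N₁ * P⁻¹ with hXdef
  have hXpsd : X.PosSemidef := by
    have := hN₁.posSemidef.conjTranspose_mul_mul_same P⁻¹
    rwa [hPiH] at this
  have hPXP : P * X * P = N₁ := by
    rw [hXdef]
    calc P * (P⁻¹ * N₁ * P⁻¹) * P = (P * P⁻¹) * N₁ * (P⁻¹ * P) := by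
          simp only [Matrix.mul_assoc]
      _ = N₁ := by rw [hPinv, hinvP, Matrix.one_mul, Matrix.mul_one]
  have hdet : N₁.det = N₂.det * X.det := by
    have e1 : N₁.det = P.det * X.det * P.det := by
      rw [← hPXP, Matrix.det_mul, Matrix.det_mul]
    have e2 : N₂.det = P.det * P.det := by rw [← hPP, Matrix.det_mul]
    rw [e1, e2]; ring
  have hXdet : IsUnit X.det := by
    have h1 := pd_isUnit_det hN₁
    rw [hdet] at h1
    exact isUnit_of_mul_isUnit_right h1
  have hXpd : X.PosDef := posDef_of_isUnit_det hXpsd hXdet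
  have hone : P⁻¹ * N₂ * P⁻¹ = 1 := by
    rw [← hPP]
    calc P⁻¹ * (P * P) * P⁻¹ = (P⁻¹ * P) * (P * P⁻¹) := by simp only [Matrix.mul_assoc]
      _ = 1 := by rw [hPinv, hinvP, Matrix.one_mul]
  have hX1 : (X - 1).PosSemidef := by
    have e : X - 1 = (P⁻¹)ᴴ * (A - B) * P⁻¹ := by
      rw [hPiH, hXdef, ← hone]
      have : N₁ - N₂ = A - B := by rw [hN₁def, hN₂def]; abel
      rw [← Matrix.sub_mul, ← Matrix.mul_sub, this]
    rw [e]
    exact hAB.conjTranspose_mul_mul_same P⁻¹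
  -- trace identity
  have htr : (N₁⁻¹).trace = (X⁻¹ * N₂⁻¹).trace := by
    have hNi : N₁⁻¹ = P⁻¹ * (X⁻¹ * P⁻¹) := by
      rw [← hPXP, Matrix.mul_inv_rev, Matrix.mul_inv_rev]
    rw [hNi, Matrix.trace_mul_comm, Matrix.mul_assoc]
    congr 1
    rw [← Matrix.mul_inv_rev, hPP]
  -- real parts of determinants
  have hd2 := hN₂.det_pos
  have hdX := hXpd.det_pos
  have hd2re : 0 < N₂.det.re := by
    have := (Complex.lt_def.mp hd2).1; simpa using this
  have hd2im : N₂.det.im = 0 := by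
    have := (Complex.lt_def.mp hd2).2; simpa using this.symm
  have hdXre : 0 < X.det.re := by
    have := (Complex.lt_def.mp hdX).1; simpa using this
  have hdXim : X.det.im = 0 := by
    have := (Complex.lt_def.mp hdX).2; simpa using this.symm
  have hd1re : N₁.det.re = N₂.det.re * X.det.re := by
    rw [hdet, Complex.mul_re, hd2im, hdXim]; ring
  have hlog : Real.log (N₁.det.re) = Real.log (N₂.det.re) + Real.log (X.det.re) := by
    rw [hd1re, Real.log_mul (ne_of_gt hd2re) (ne_of_gt hdXre)]
  -- decompose the trace term
  have hdecomp : X⁻¹ * N₂⁻¹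
      = N₂⁻¹ - ((1 : Matrix n n ℂ) - X⁻¹) + ((1 : Matrix n n ℂ) - X⁻¹) * ((1 : Matrix n n ℂ) - N₂⁻¹) := by
    noncomm_ring
  have h1X : ((1 : Matrix n n ℂ) - X⁻¹).PosSemidef := one_sub_inv_posSemidef hXpd hX1
  have h1N : ((1 : Matrix n n ℂ) - N₂⁻¹).PosSemidef := by
    refine one_sub_inv_posSemidef hN₂ ?_
    have : N₂ - 1 = B := by rw [hN₂def]; abel
    rwa [this]
  have hcross : 0 ≤ (((1 : Matrix n n ℂ) - X⁻¹) * ((1 : Matrix n n ℂ) - N₂⁻¹)).trace.re :=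
    trace_mul_re_nonneg h1X h1N
  -- eigenvalue bound
  set μ : n → ℝ := hXpd.1.eigenvalues with hμdef
  have hμpos : ∀ i, 0 < μ i := fun i => hXpd.eigenvalues_pos i
  have hdetX : X.det.re = ∏ i, μ i := det_re_eq_prod hXpd
  have htrX : (X⁻¹).trace.re = ∑ i, (μ i)⁻¹ := trace_inv_re_eq hXpd
  have h1Xtr : ((1 : Matrix n n ℂ) - X⁻¹).trace.re = (Fintype.card n : ℝ) - ∑ i, (μ i)⁻¹ := by
    rw [Matrix.trace_sub, Matrix.trace_one, Complex.sub_re, htrX]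
    simp
  have hkey : 0 ≤ Real.log (X.det.re) - ((1 : Matrix n n ℂ) - X⁻¹).trace.re := by
    rw [hdetX, h1Xtr, Real.log_prod (fun i _ => ne_of_gt (hμpos i))]
    have : ∑ i, Real.log (μ i) - ((Fintype.card n : ℝ) - ∑ i, (μ i)⁻¹)
        = ∑ i, (Real.log (μ i) - (1 - (μ i)⁻¹)) := by
      rw [Finset.sum_sub_distrib, Finset.sum_sub_distrib]
      simp [Finset.card_univ]
    rw [this]
    refine Finset.sum_nonneg fun i _ => ?_
    have h := Real.log_le_sub_one_of_pos (inv_pos.mpr (hμpos i))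
    rw [Real.log_inv] at h
    linarith
  -- assemble
  have htrre : (N₁⁻¹).trace.re
      = (N₂⁻¹).trace.re - ((1 : Matrix n n ℂ) - X⁻¹).trace.re
        + (((1 : Matrix n n ℂ) - X⁻¹) * ((1 : Matrix n n ℂ) - N₂⁻¹)).trace.re := by
    rw [htr, hdecomp]
    rw [Matrix.trace_add, Matrix.trace_sub, Complex.add_re, Complex.sub_re]
  rw [hlog, htrre]
  linarith

lemma reduce_det_trace {Q W : Matrix n n ℂ} (hQ : Q.PosSemidef) (hW : W.PosSemidef)
    {c : ℝ} (hc : 0 < c) :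
    (1 + c • (W * Q)).det = (1 + c • (hQ.sqrt * W * hQ.sqrt)).det ∧
    ((1 + c • (W * Q))⁻¹).trace = ((1 + c • (hQ.sqrt * W * hQ.sqrt))⁻¹).trace := by
  set S : Matrix n n ℂ := hQ.sqrt with hSdef
  have hSS : S * S = Q := hQ.sqrt_mul_self
  have hSH : Sᴴ = S := hQ.posSemidef_sqrt.1.eq
  set R : Matrix n n ℂ := S * W * S with hRdef
  have hR : R.PosSemidef := by
    have := hW.conjTranspose_mul_mul_same S
    rwa [hSH] at this
  set M : Matrix n n ℂ := 1 + c • (W * Q) with hMdef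
  set N : Matrix n n ℂ := 1 + c • R with hNdef
  have hN : N.PosDef := Matrix.PosDef.add_posSemidef Matrix.PosDef.one (smul_posSemidef hc.le hR)
  have hdet : M.det = N.det := by
    have e1 : c • (W * Q) = (c • (W * S)) * S := by
      rw [← hSS, ← Matrix.mul_assoc, Matrix.smul_mul]
    have e2 : S * (c • (W * S)) = c • R := by
      rw [Matrix.mul_smul, hRdef, Matrix.mul_assoc]
    rw [hMdef, e1, Matrix.det_one_add_mul_comm, e2]
  have hNdet : IsUnit N.det := pd_isUnit_det hN
  have hMdet : IsUnit M.det := by rw [hdet]; exact hNdet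
  have hSM : S * M = N * S := by
    have e3 : S * (W * Q) = R * S := by
      rw [← hSS, hRdef]
      simp only [Matrix.mul_assoc]
    rw [hMdef, hNdef, Matrix.mul_add, Matrix.add_mul, Matrix.mul_one, Matrix.one_mul,
      Matrix.mul_smul, Matrix.smul_mul, e3]
  have hSMi : S * M⁻¹ = N⁻¹ * S := by
    calc S * M⁻¹ = (N⁻¹ * N) * (S * M⁻¹) := by
          rw [Matrix.nonsing_inv_mul _ hNdet, Matrix.one_mul]
      _ = N⁻¹ * ((N * S) * M⁻¹) := by simp only [Matrix.mul_assoc]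
      _ = N⁻¹ * ((S * M) * M⁻¹) := by rw [hSM]
      _ = N⁻¹ * (S * (M * M⁻¹)) := by simp only [Matrix.mul_assoc]
      _ = N⁻¹ * S := by rw [Matrix.mul_nonsing_inv _ hMdet, Matrix.mul_one]
  have hMinv : M⁻¹ = 1 - c • ((W * Q) * M⁻¹) := by
    have h1 := Matrix.mul_nonsing_inv _ hMdet
    rw [hMdef] at h1 ⊢
    rw [Matrix.add_mul, Matrix.one_mul, Matrix.smul_mul] at h1
    rw [eq_sub_iff_add_eq, add_comm]
    rw [add_comm] at h1
    exact h1
  have hNinv : N⁻¹ = 1 - c • (R * N⁻¹) := by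
    have h1 := Matrix.mul_nonsing_inv _ hNdet
    rw [hNdef] at h1 ⊢
    rw [Matrix.add_mul, Matrix.one_mul, Matrix.smul_mul] at h1
    rw [eq_sub_iff_add_eq, add_comm]
    rw [add_comm] at h1
    exact h1
  have htrceq : ((W * Q) * M⁻¹).trace = (R * N⁻¹).trace := by
    have e4 : (W * Q) * M⁻¹ = (W * S) * (N⁻¹ * S) := by
      rw [← hSS, ← hSMi]
      simp only [Matrix.mul_assoc]
    rw [e4, Matrix.trace_mul_comm, hRdef]
    rw [Matrix.trace_mul_comm (R := ℂ) (S * W * S) N⁻¹]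
    congr 1
    simp only [Matrix.mul_assoc]
  refine ⟨hdet, ?_⟩
  rw [hMinv, hNinv, Matrix.trace_sub, Matrix.trace_sub, Matrix.trace_smul, Matrix.trace_smul,
    htrceq]


theorem detection_functional_monotone' (Na : ℕ) (σw : ℝ) (hσw : 0 < σw)
    (Q : Matrix (Fin Na) (Fin Na) ℂ) (hQ : Q.PosSemidef)
    (W₁ W₂ : Matrix (Fin Na) (Fin Na) ℂ) (hW₁ : W₁.PosSemidef) (hW₂ : W₂.PosSemidef)
    (hle : (W₁ - W₂).PosSemidef) :
    Dfun σw W₂ Q ≤ Dfun σw W₁ Q := by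
  have hc : 0 < ((σw ^ 2)⁻¹ : ℝ) := by positivity
  set c : ℝ := (σw ^ 2)⁻¹
  set S : Matrix (Fin Na) (Fin Na) ℂ := hQ.sqrt
  have hSH : Sᴴ = S := hQ.posSemidef_sqrt.1.eq
  have h1 := reduce_det_trace hQ hW₁ hc
  have h2 := reduce_det_trace hQ hW₂ hc
  have hR : ∀ (W : Matrix (Fin Na) (Fin Na) ℂ), W.PosSemidef → (c • (S * W * S)).PosSemidef := by
    intro W hW
    refine smul_posSemidef hc.le ?_
    have := hW.conjTranspose_mul_mul_same S
    rwa [hSH] at this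
  have hAB : (c • (S * W₁ * S) - c • (S * W₂ * S)).PosSemidef := by
    have e : c • (S * W₁ * S) - c • (S * W₂ * S) = c • (S * (W₁ - W₂) * S) := by
      rw [← smul_sub]
      congr 1
      rw [Matrix.mul_sub, Matrix.sub_mul]
    rw [e]
    exact hR _ hle
  have hcore := core_mono (hR W₁ hW₁) (hR W₂ hW₂) hAB
  unfold Dfun
  rw [h1.1, h1.2, h2.1, h2.2]
  exact sub_le_sub_right hcore _


end Aux

/-- **Monotonicity of the detection functional in Willie's Gram matrix (Appendix D).**
If `W₁ − W₂` is positive semidefinite, then `D(W₁, Q) ≥ D(W₂, Q)`. -/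
theorem detection_functional_monotone (Na : ℕ) (hNa : 1 ≤ Na) (σw : ℝ) (hσw : 0 < σw)
    (Q : Matrix (Fin Na) (Fin Na) ℂ) (hQ : Q.PosSemidef)
    (W₁ W₂ : Matrix (Fin Na) (Fin Na) ℂ) (hW₁ : W₁.PosSemidef) (hW₂ : W₂.PosSemidef)
    (hle : (W₁ - W₂).PosSemidef) :
    Dfun σw W₂ Q ≤ Dfun σw W₁ Q :=
  detection_functional_monotone' Na σw hσw Q hQ W₁ W₂ hW₁ hW₂ hle
end

section
/- Detection functional of a scaled projection (computation underlying Appendix F): Let N_a ≥ 1, σ_w > 0, γ > 0, a ≥ 0, and let Π be an N_a×N_a complex Hermitian idempotent matrix (orthogonal projection) of rank r. Set Q := a • Π and x := γ·a/σ_w². Then D(γ·1, Q) = r · (Real.log(1 + x) + 1/(1 + x) − 1); in particular, if n·r·x² ≤ 2δ² for reals n ≥ 1 and δ ≥ 0, then n·D(γ·1, Q) ≤ 2δ². -/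
open Matrix
open scoped ComplexOrder

/-- **Detection functional of a scaled projection (Appendix F).**
For an orthogonal projection `Π` of rank `r`, `Q = a • Π` and `x = γ·a/σ_w²`:
`D(γ·1, Q) = r·(log(1+x) + 1/(1+x) − 1)`; in particular `n·r·x² ≤ 2δ²` implies
`n·D(γ·1, Q) ≤ 2δ²`. -/
theorem detection_of_scaled_projection (Na r : ℕ) (hNa : 1 ≤ Na)
    (σw γ a : ℝ) (hσw : 0 < σw) (hγ : 0 < γ) (ha : 0 ≤ a)
    (Pi : Matrix (Fin Na) (Fin Na) ℂ) (hherm : Pi.IsHermitian) (hidem : Pi * Pi = Pi)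
    (hrank : Pi.rank = r)
    (x : ℝ) (hx : x = γ * a / σw ^ 2) :
    Dfun σw ((γ : ℂ) • (1 : Matrix (Fin Na) (Fin Na) ℂ)) ((a : ℂ) • Pi)
        = r * (Real.log (1 + x) + 1 / (1 + x) - 1) ∧
    ∀ n δ : ℝ, 1 ≤ n → 0 ≤ δ → n * r * x ^ 2 ≤ 2 * δ ^ 2 →
      n * Dfun σw ((γ : ℂ) • (1 : Matrix (Fin Na) (Fin Na) ℂ)) ((a : ℂ) • Pi)
        ≤ 2 * δ ^ 2 := by
  classical
  have hx0 : 0 ≤ x := by rw [hx]; positivity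
  have h1x : (0:ℝ) < 1 + x := by linarith
  set lam := hherm.eigenvalues with hlam
  set U : Matrix (Fin Na) (Fin Na) ℂ := (hherm.eigenvectorUnitary : Matrix (Fin Na) (Fin Na) ℂ)
    with hUdef
  have hUU : star U * U = 1 := Matrix.mem_unitaryGroup_iff'.mp hherm.eigenvectorUnitary.2
  have hUU' : U * star U = 1 := Matrix.mem_unitaryGroup_iff.mp hherm.eigenvectorUnitary.2
  have hD : star U * Pi * U = diagonal (RCLike.ofReal ∘ lam) :=
    by have h := hherm.conjStarAlgAut_star_eigenvectorUnitary
       rw [Unitary.conjStarAlgAut_star_apply] at h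
       exact h
  -- eigenvalues are 0 or 1
  have heig : ∀ i, lam i = 0 ∨ lam i = 1 := by
    intro i
    have hDD : (diagonal (RCLike.ofReal ∘ lam) : Matrix (Fin Na) (Fin Na) ℂ)
        * diagonal (RCLike.ofReal ∘ lam) = diagonal (RCLike.ofReal ∘ lam) := by
      rw [← hD,
        show (star U * Pi * U) * (star U * Pi * U) = star U * (Pi * (U * star U) * Pi) * U by
          simp only [Matrix.mul_assoc],
        hUU', Matrix.mul_one, hidem]
    have h := congrFun (congrFun hDD i) i
    simp only [Matrix.diagonal_mul_diagonal, Matrix.diagonal_apply_eq, Function.comp_apply,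
      Pi.mul_apply] at h
    have h' : (lam i : ℂ) * (lam i : ℂ) = (lam i : ℂ) := h
    have h'' : lam i * lam i = lam i := by exact_mod_cast h'
    rcases mul_eq_zero.mp (by ring_nf; nlinarith [h''] : lam i * (lam i - 1) = 0) with h0 | h0
    · exact Or.inl h0
    · exact Or.inr (by linarith [sub_eq_zero.mp h0])
  set S : Finset (Fin Na) := Finset.univ.filter (fun i => lam i = 1) with hS
  have hSmem : ∀ i, i ∈ S ↔ lam i = 1 := by
    intro i; simp [hS]
  have hcard : S.card = r := by
    have h1 := hherm.rank_eq_card_non_zero_eigs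
    rw [hrank] at h1
    rw [Fintype.card_subtype] at h1
    have : Finset.univ.filter (fun i => hherm.eigenvalues i ≠ 0) = S := by
      apply Finset.filter_congr
      intro i _
      rcases heig i with h0 | h0 <;> simp [h0, ← hlam]
    rw [this] at h1
    omega
  -- the matrix inside Dfun equals 1 + x • Pi
  have key : ((σw ^ 2)⁻¹ : ℝ) •
      (((γ:ℂ) • (1 : Matrix (Fin Na) (Fin Na) ℂ)) * ((a:ℂ) • Pi)) = (x:ℂ) • Pi := by
    rw [smul_mul_smul_comm, Matrix.one_mul]
    ext i j
    simp only [Matrix.smul_apply, smul_eq_mul, Complex.real_smul]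
    rw [hx]
    push_cast
    have : (σw:ℂ) ^ 2 ≠ 0 := by
      exact_mod_cast pow_ne_zero 2 (Complex.ofReal_ne_zero.mpr hσw.ne')
    field_simp
  -- determinant
  have hdiag : (1 : Matrix (Fin Na) (Fin Na) ℂ) + (x:ℂ) • diagonal (RCLike.ofReal ∘ lam)
      = diagonal (fun i => 1 + (x:ℂ) * (lam i : ℂ)) := by
    ext i j
    rcases eq_or_ne i j with h | h
    · subst h
      simp [Matrix.diagonal_apply_eq, Matrix.one_apply_eq]
    · simp [Matrix.diagonal_apply_ne _ h, Matrix.one_apply_ne h]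
  have hconj : star U * (1 + (x:ℂ) • Pi) * U
      = diagonal (fun i => 1 + (x:ℂ) * (lam i : ℂ)) := by
    rw [Matrix.mul_add, Matrix.add_mul, Matrix.mul_one, hUU, Matrix.mul_smul, Matrix.smul_mul,
      hD, hdiag]
  have hprod : ∏ i, ((1:ℂ) + (x:ℂ) * (lam i : ℂ)) = (((1+x)^r : ℝ) : ℂ) := by
    rw [← Finset.prod_filter_mul_prod_filter_not Finset.univ (fun i => lam i = 1)]
    have h1 : ∏ i ∈ Finset.univ.filter (fun i => lam i = 1), ((1:ℂ) + (x:ℂ) * (lam i : ℂ))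
        = (1 + (x:ℂ))^r := by
      rw [Finset.prod_congr rfl (fun i hi => ?_), Finset.prod_const, ← hS, hcard]
      have : lam i = 1 := (Finset.mem_filter.mp hi).2
      rw [this]; push_cast; ring
    have h2 : ∏ i ∈ Finset.univ.filter (fun i => ¬ lam i = 1), ((1:ℂ) + (x:ℂ) * (lam i : ℂ))
        = 1 := by
      apply Finset.prod_eq_one
      intro i hi
      have hne := (Finset.mem_filter.mp hi).2
      rcases heig i with h0 | h0
      · rw [h0]; push_cast; ring
      · exact absurd h0 hne
    rw [h1, h2, mul_one]
    push_cast; ring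
  have hdet : ((1 : Matrix (Fin Na) (Fin Na) ℂ) + (x:ℂ) • Pi).det = (((1+x)^r : ℝ) : ℂ) := by
    have : ((1 : Matrix (Fin Na) (Fin Na) ℂ) + (x:ℂ) • Pi).det
        = (star U * (1 + (x:ℂ) • Pi) * U).det := by
      rw [Matrix.det_mul_right_comm, hUU, Matrix.one_mul]
    rw [this, hconj, Matrix.det_diagonal, hprod]
  -- trace of Pi
  have htrPi : Pi.trace = (r : ℂ) := by
    conv_lhs => rw [hherm.spectral_theorem]
    rw [Unitary.conjStarAlgAut_apply, ← hUdef, ← hlam, Matrix.trace_mul_cycle, hUU, Matrix.one_mul, Matrix.trace_diagonal]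
    rw [← Finset.sum_filter_add_sum_filter_not Finset.univ (fun i => lam i = 1)]
    have h1 : ∑ i ∈ Finset.univ.filter (fun i => lam i = 1), ((RCLike.ofReal ∘ lam) i : ℂ)
        = (r : ℂ) := by
      have hone : ∀ i ∈ Finset.univ.filter (fun i => lam i = 1),
          ((RCLike.ofReal ∘ lam) i : ℂ) = 1 := by
        intro i hi
        have : lam i = 1 := (Finset.mem_filter.mp hi).2
        simp [this]
      rw [Finset.sum_congr rfl hone, Finset.sum_const, ← hS, hcard]
      simp
    have h2 : ∑ i ∈ Finset.univ.filter (fun i => ¬ lam i = 1), ((RCLike.ofReal ∘ lam) i : ℂ)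
        = 0 := by
      apply Finset.sum_eq_zero
      intro i hi
      have hne := (Finset.mem_filter.mp hi).2
      rcases heig i with h0 | h0
      · simp [h0]
      · exact absurd h0 hne
    rw [h1, h2, add_zero]
  -- inverse
  have hxc : ((1:ℂ) + (x:ℂ)) ≠ 0 := by
    have : ((1:ℝ) + x) ≠ 0 := h1x.ne'
    exact_mod_cast (Complex.ofReal_ne_zero.mpr this)
  have hinv : ((1 : Matrix (Fin Na) (Fin Na) ℂ) + (x:ℂ) • Pi)⁻¹
      = 1 - (((x/(1+x) : ℝ)) : ℂ) • Pi := by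
    apply Matrix.inv_eq_right_inv
    set d : ℂ := (((x/(1+x) : ℝ)) : ℂ) with hd
    rw [Matrix.mul_sub, Matrix.mul_one]
    have hexp : ((1 : Matrix (Fin Na) (Fin Na) ℂ) + (x:ℂ) • Pi) * (d • Pi)
        = d • Pi + ((x:ℂ) * d) • Pi := by
      rw [Matrix.add_mul, Matrix.one_mul, smul_mul_smul_comm, hidem]
    have hdx : d + (x:ℂ) * d = (x:ℂ) := by
      rw [hd]; push_cast; field_simp
    rw [hexp, ← add_smul, hdx, add_sub_cancel_right]
  -- assemble Dfun value
  have hDval : Dfun σw ((γ : ℂ) • (1 : Matrix (Fin Na) (Fin Na) ℂ)) ((a : ℂ) • Pi)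
      = r * (Real.log (1 + x) + 1 / (1 + x) - 1) := by
    unfold Dfun
    rw [key, hdet, hinv]
    rw [Matrix.trace_sub, Matrix.trace_smul, Matrix.trace_one, htrPi]
    simp only [Complex.ofReal_re, smul_eq_mul]
    rw [Real.log_pow]
    have : (((Fintype.card (Fin Na)) : ℂ) - (((x/(1+x) : ℝ)) : ℂ) * (r:ℂ)).re
        = (Na : ℝ) - (x/(1+x)) * r := by
      simp
      left
      rw [show (1:ℂ) + (x:ℂ) = ((1+x : ℝ):ℂ) by push_cast; ring, ← Complex.ofReal_div,
        Complex.ofReal_re]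
    rw [this]
    have hxx : x / (1+x) = 1 - 1/(1+x) := by field_simp; ring
    rw [hxx]
    ring
  refine ⟨hDval, ?_⟩
  intro n δ hn hδ hle
  rw [hDval]
  -- bound: log(1+x) + 1/(1+x) - 1 ≤ x^2
  have hlog : Real.log (1 + x) ≤ x := by
    have := Real.log_le_sub_one_of_pos h1x
    linarith
  have hfrac : 1/(1+x) ≤ 1 - x + x^2 := by
    rw [div_le_iff₀ h1x]
    nlinarith
  have hf : Real.log (1 + x) + 1 / (1 + x) - 1 ≤ x^2 := by nlinarith
  have hr0 : (0:ℝ) ≤ (r:ℝ) := Nat.cast_nonneg r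
  have hn0 : (0:ℝ) ≤ n := by linarith
  have : n * ((r:ℝ) * (Real.log (1 + x) + 1 / (1 + x) - 1)) ≤ n * ((r:ℝ) * x^2) := by
    apply mul_le_mul_of_nonneg_left _ hn0
    exact mul_le_mul_of_nonneg_left hf hr0
  calc n * ((r:ℝ) * (Real.log (1 + x) + 1 / (1 + x) - 1))
      ≤ n * ((r:ℝ) * x^2) := this
    _ = n * (r:ℝ) * x^2 := by ring
    _ ≤ 2 * δ^2 := hle
end
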